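/- Let λ : S^{n-1} → ℝ be continuous and C = ⋂_{s ∈ S^{n-1}} {x : ⟨s, x⟩ ≤ λ(s)}. Then for every ε > 0 there exist finitely many unit vectors s₁, …, s_k such that every point of ⋂_{i=1}^k {x : ⟨s_i, x⟩ ≤ λ(s_i)} lies within Euclidean distance ε of C. -/

import Mathlib

open scoped RealInnerProductSpace
open Metric

/-- For `C = ⋂_{s ∈ S^{n-1}} {x : ⟪s, x⟫ ≤ λ(s)}` with `λ` continuous, and every `ε > 0`,
finitely many of the half-spaces suffice to approximate `C` to within distance `ε`. -/
theorem stmt_11 (n : ℕ) (lam : EuclideanSpace ℝ (Fin n) → ℝ)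
    (hlam : ContinuousOn lam (sphere (0 : EuclideanSpace ℝ (Fin n)) 1))
    (ε : ℝ) (hε : 0 < ε) :
    ∃ (k : ℕ) (s : Fin k → EuclideanSpace ℝ (Fin n)),
      (∀ i, ‖s i‖ = 1) ∧
      ∀ x : EuclideanSpace ℝ (Fin n), (∀ i, ⟪s i, x⟫ ≤ lam (s i)) →
        EMetric.infEdist x (⋂ s' ∈ sphere (0 : EuclideanSpace ℝ (Fin n)) 1,
          {y : EuclideanSpace ℝ (Fin n) | ⟪s', y⟫ ≤ lam s'}) ≤ ENNReal.ofReal ε := by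
  classical
  set S := sphere (0 : EuclideanSpace ℝ (Fin n)) 1 with hSdef
  set C := ⋂ s' ∈ S, {y : EuclideanSpace ℝ (Fin n) | ⟪s', y⟫ ≤ lam s'} with hCdef
  by_cases hS : S.Nonempty
  swap
  · refine ⟨0, Fin.elim0, fun i => i.elim0, fun x _ => ?_⟩
    rw [Set.not_nonempty_iff_eq_empty] at hS
    rw [hCdef, hS]
    simp only [Set.mem_empty_iff_false, Set.iInter_of_empty, Set.iInter_univ]
    exact le_trans (le_of_eq (EMetric.infEdist_zero_of_mem (Set.mem_univ x))) zero_le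
  -- bound on lam
  have hScomp : IsCompact S := isCompact_sphere _ _
  obtain ⟨s₀, hs₀S, hM⟩ := hScomp.exists_isMaxOn hS hlam
  set M := lam s₀ with hMdef
  set R : ℝ := 2 * max M 0 + 1 with hRdef
  have hR0 : 0 < R := by positivity
  -- C is contained in the thickening of itself
  have hCthick : C ⊆ thickening ε C := self_subset_thickening hε C
  -- the relaxed sets
  set A : ℕ → Set (EuclideanSpace ℝ (Fin n)) := fun m =>
    closedBall (0 : EuclideanSpace ℝ (Fin n)) R ∩ ⋂ s' ∈ S, {y : EuclideanSpace ℝ (Fin n) | ⟪s', y⟫ ≤ lam s' + 1 / (m + 1)} with hAdef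
  have hAclosed : ∀ m, IsClosed (A m) := by
    intro m
    exact isClosed_closedBall.inter (isClosed_biInter fun v _ =>
      isClosed_le (continuous_const.inner continuous_id) continuous_const)
  have hAcomp : ∀ m, IsCompact (A m) := fun m =>
    (isCompact_closedBall 0 R).inter_right (isClosed_biInter fun v _ =>
      isClosed_le (continuous_const.inner continuous_id) continuous_const)
  have hAanti : ∀ m, A (m + 1) ⊆ A m := by
    intro m x hx
    refine ⟨hx.1, Set.mem_iInter₂.2 fun v hv => ?_⟩
    have h1 := Set.mem_iInter₂.1 hx.2 v hv
    have h2 : (1 : ℝ) / (m + 1 + 1) ≤ 1 / (m + 1) := by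
      apply one_div_le_one_div_of_le <;> push_cast <;> linarith
    simp only [Set.mem_setOf_eq] at h1 ⊢
    push_cast at h1 ⊢
    linarith
  -- find m with A m ⊆ thickening ε C
  have key : ∃ m, A m ⊆ thickening ε C := by
    by_contra h
    push_neg at h
    set K : ℕ → Set (EuclideanSpace ℝ (Fin n)) := fun m => A m ∩ (thickening ε C)ᶜ with hKdef
    have hKne : ∀ m, (K m).Nonempty := by
      intro m
      obtain ⟨x, hx1, hx2⟩ := Set.not_subset.1 (h m)
      exact ⟨x, hx1, hx2⟩
    have hKcl : ∀ m, IsClosed (K m) := fun m =>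
      (hAclosed m).inter isOpen_thickening.isClosed_compl
    have hKanti : ∀ m, K (m + 1) ⊆ K m := fun m x hx => ⟨hAanti m hx.1, hx.2⟩
    obtain ⟨x, hx⟩ := IsCompact.nonempty_iInter_of_sequence_nonempty_isCompact_isClosed
      K hKanti hKne ((hAcomp 0).inter_right isOpen_thickening.isClosed_compl) hKcl
    have hxK : ∀ m, x ∈ K m := fun m => Set.mem_iInter.1 hx m
    have hxC : x ∈ C := by
      refine Set.mem_iInter₂.2 fun v hv => ?_
      show ⟪v, x⟫ ≤ lam v
      have hall : ∀ m : ℕ, ⟪v, x⟫ ≤ lam v + 1 / (m + 1) := fun m =>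
        Set.mem_iInter₂.1 (hxK m).1.2 v hv
      refine le_of_forall_pos_le_add fun η hη => ?_
      obtain ⟨m, hm⟩ := exists_nat_one_div_lt hη
      exact (hall m).trans (by linarith)
    exact (hxK 0).2 (hCthick hxC)
  obtain ⟨m, hm⟩ := key
  set η : ℝ := 1 / (m + 1) with hηdef
  have hη0 : 0 < η := by positivity
  -- uniform continuity
  have hUC : UniformContinuousOn lam S := hScomp.uniformContinuousOn_of_continuous hlam
  rw [Metric.uniformContinuousOn_iff] at hUC
  obtain ⟨δ₀, hδ₀, hδ₀'⟩ := hUC (η / 2) (by positivity)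
  set δ : ℝ := min δ₀ (min (1 / 2) (η / (2 * (R + 1)))) with hδdef
  have hδ0 : 0 < δ := by
    refine lt_min hδ₀ (lt_min (by norm_num) (by positivity))
  have hδhalf : δ ≤ 1 / 2 := (min_le_right _ _).trans (min_le_left _ _)
  have hδη : δ ≤ η / (2 * (R + 1)) := (min_le_right _ _).trans (min_le_right _ _)
  -- finite δ-net
  obtain ⟨t, htS, htfin, htcov⟩ := hScomp.elim_finite_subcover_image
    (fun v (_ : v ∈ S) => isOpen_ball (x := v) (ε := δ))
    (fun v hv => Set.mem_biUnion hv (mem_ball_self hδ0))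
  set F : Finset (EuclideanSpace ℝ (Fin n)) := htfin.toFinset with hFdef
  have hFmem : ∀ v, v ∈ F ↔ v ∈ t := fun v => htfin.mem_toFinset
  set sfun : Fin F.card → EuclideanSpace ℝ (Fin n) := fun i => ((F.equivFin.symm i : F) : EuclideanSpace ℝ (Fin n)) with hsfun
  have hsmem : ∀ i, sfun i ∈ S := fun i => htS ((hFmem _).1 (F.equivFin.symm i).2)
  have hsnorm : ∀ i, ‖sfun i‖ = 1 := by
    intro i
    have := hsmem i
    rwa [hSdef, mem_sphere_zero_iff_norm] at this
  have hnet : ∀ v ∈ S, ∃ i, dist v (sfun i) < δ := by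
    intro v hv
    obtain ⟨w, hw, hvw⟩ := Set.mem_iUnion₂.1 (htcov hv)
    refine ⟨F.equivFin ⟨w, (hFmem w).2 hw⟩, ?_⟩
    have : sfun (F.equivFin ⟨w, (hFmem w).2 hw⟩) = w := by
      simp [hsfun]
    rw [this]
    exact hvw
  refine ⟨F.card, sfun, hsnorm, fun x hx => ?_⟩
  -- bound on ‖x‖
  have hxR : ‖x‖ ≤ R := by
    rcases eq_or_ne x 0 with h0 | h0
    · simp only [h0, norm_zero]; positivity
    · set u : EuclideanSpace ℝ (Fin n) := ‖x‖⁻¹ • x with hu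
      have hxpos : (0 : ℝ) < ‖x‖ := norm_pos_iff.2 h0
      have huS : u ∈ S := by
        rw [hSdef, mem_sphere_zero_iff_norm, hu, norm_smul, norm_inv, norm_norm,
          inv_mul_cancel₀ (ne_of_gt hxpos)]
      obtain ⟨i, hi⟩ := hnet u huS
      have h1 : ⟪u, x⟫ = ‖x‖ := by
        rw [hu, real_inner_smul_left, real_inner_self_eq_norm_sq]
        field_simp
      have h2 : ⟪u, x⟫ - ⟪sfun i, x⟫ ≤ ‖u - sfun i‖ * ‖x‖ := by
        rw [← inner_sub_left]
        exact real_inner_le_norm _ _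
      have h3 : ‖u - sfun i‖ < δ := by rwa [← dist_eq_norm]
      have h4 : ⟪sfun i, x⟫ ≤ lam (sfun i) := hx i
      have h5 : lam (sfun i) ≤ M := hM (hsmem i)
      have h6 : ‖u - sfun i‖ * ‖x‖ ≤ (1 / 2) * ‖x‖ :=
        mul_le_mul_of_nonneg_right (le_of_lt (lt_of_lt_of_le h3 hδhalf)) (norm_nonneg x)
      have h7 : M ≤ max M 0 := le_max_left _ _
      rw [hRdef]
      linarith
  -- x lies in A m
  have hxA : x ∈ A m := by
    refine ⟨mem_closedBall_zero_iff.2 hxR, Set.mem_iInter₂.2 fun v hv => ?_⟩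
    obtain ⟨i, hi⟩ := hnet v hv
    have h2 : ⟪v, x⟫ - ⟪sfun i, x⟫ ≤ ‖v - sfun i‖ * ‖x‖ := by
      rw [← inner_sub_left]
      exact real_inner_le_norm _ _
    have h3 : ‖v - sfun i‖ < δ := by rwa [← dist_eq_norm]
    have h4 : ⟪sfun i, x⟫ ≤ lam (sfun i) := hx i
    have hlc : |lam v - lam (sfun i)| < η / 2 := by
      have := hδ₀' v hv (sfun i) (hsmem i) (lt_of_lt_of_le hi (min_le_left _ _))
      rwa [Real.dist_eq] at this
    have hlc' : lam (sfun i) ≤ lam v + η / 2 := by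
      have := abs_lt.1 hlc
      linarith [this.1, this.2]
    have h6 : ‖v - sfun i‖ * ‖x‖ ≤ δ * R := by
      apply mul_le_mul (le_of_lt h3) hxR (norm_nonneg x) (le_of_lt hδ0)
    have h7 : δ * R ≤ η / 2 := by
      have h8 : δ * (R + 1) ≤ η / 2 := by
        calc δ * (R + 1) ≤ (η / (2 * (R + 1))) * (R + 1) :=
              mul_le_mul_of_nonneg_right hδη (by linarith)
          _ = η / 2 := by field_simp
      nlinarith [hδ0.le]
    show ⟪v, x⟫ ≤ lam v + 1 / (m + 1)
    have : ⟪v, x⟫ ≤ lam v + η := by nlinarith [h2, h4, h6, h7, hlc']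
    rwa [hηdef] at this
  have := hm hxA
  rw [mem_thickening_iff_infEdist_lt] at this
  exact le_of_lt this
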